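/- For a dynamical system (X,G), the affine system (M(X),G) is irreducible if and only if (X,G) is minimal and strongly proximal. -/

import Mathlib

open MeasureTheory Filter Topology Set
open scoped ENNReal NNReal BoundedContinuousFunction

/-- The point mass `δ_x` as a probability measure. -/
noncomputable def diracPM {X : Type*} [MeasurableSpace X] (x : X) : ProbabilityMeasure X :=
  ⟨MeasureTheory.Measure.dirac x, inferInstance⟩

/-- The induced action of `g` on the space of probability measures. -/
noncomputable def smulPM {G X : Type*} [Group G] [TopologicalSpace X] [MeasurableSpace X]
    [BorelSpace X] [MulAction G X] [ContinuousConstSMul G X]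
    (g : G) (μ : ProbabilityMeasure X) : ProbabilityMeasure X :=
  μ.map (f := fun x => g • x) (continuous_const_smul g).measurable.aemeasurable

/-- The convex combination `a•μ + (1-a)•ν` of probability measures. -/
noncomputable def combPM {X : Type*} [MeasurableSpace X] (a : ℝ) (ha0 : 0 ≤ a) (ha1 : a ≤ 1)
    (μ ν : ProbabilityMeasure X) : ProbabilityMeasure X :=
  ⟨ENNReal.ofReal a • (μ : MeasureTheory.Measure X) +
      ENNReal.ofReal (1 - a) • (ν : MeasureTheory.Measure X), by
    constructor
    simp [MeasureTheory.Measure.smul_apply, measure_univ]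
    rw [← ENNReal.ofReal_add ha0 (by linarith)]
    norm_num⟩

section Aux

set_option linter.unusedSectionVars false
variable {X : Type*} [MetricSpace X] [CompactSpace X] [MeasurableSpace X] [BorelSpace X]

lemma combPM_toMeasure (a : ℝ) (h0 : 0 ≤ a) (h1 : a ≤ 1) (μ ν : ProbabilityMeasure X) :
    (combPM a h0 h1 μ ν : Measure X)
      = ENNReal.ofReal a • (μ : Measure X) + ENNReal.ofReal (1 - a) • (ν : Measure X) := rfl

lemma diracPM_toMeasure (x : X) : (diracPM x : Measure X) = Measure.dirac x := rfl

lemma integral_combPM (a : ℝ) (h0 : 0 ≤ a) (h1 : a ≤ 1) (μ ν : ProbabilityMeasure X)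
    (f : X →ᵇ ℝ) :
    ∫ x, f x ∂(combPM a h0 h1 μ ν : Measure X)
      = a * ∫ x, f x ∂(μ : Measure X) + (1 - a) * ∫ x, f x ∂(ν : Measure X) := by
  rw [combPM_toMeasure, integral_add_measure
      ((f.integrable _).smul_measure ENNReal.ofReal_ne_top)
      ((f.integrable _).smul_measure ENNReal.ofReal_ne_top),
    integral_smul_measure, integral_smul_measure,
    ENNReal.toReal_ofReal h0, ENNReal.toReal_ofReal (by linarith)]
  simp [smul_eq_mul]

lemma continuous_combPM (a : ℝ) (h0 : 0 ≤ a) (h1 : a ≤ 1) :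
    Continuous (fun p : ProbabilityMeasure X × ProbabilityMeasure X =>
      combPM a h0 h1 p.1 p.2) := by
  rw [continuous_iff_continuousAt]
  intro p
  unfold ContinuousAt
  rw [ProbabilityMeasure.tendsto_iff_forall_integral_tendsto]
  intro f
  simp only [integral_combPM]
  exact (Tendsto.const_mul a
      (((MeasureTheory.ProbabilityMeasure.continuous_integral_boundedContinuousFunction f).comp
        continuous_fst).tendsto p)).add
    (Tendsto.const_mul (1 - a)
      (((MeasureTheory.ProbabilityMeasure.continuous_integral_boundedContinuousFunction f).comp
        continuous_snd).tendsto p))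

end Aux

section Aux2

set_option linter.unusedSectionVars false
variable {G X : Type*} [Group G] [MetricSpace X] [CompactSpace X] [MeasurableSpace X]
  [BorelSpace X] [MulAction G X] [ContinuousConstSMul G X]

lemma smulPM_toMeasure (g : G) (μ : ProbabilityMeasure X) :
    (smulPM g μ : Measure X) = Measure.map (fun x => g • x) (μ : Measure X) := rfl

lemma smulPM_one (μ : ProbabilityMeasure X) : smulPM (1 : G) μ = μ := by
  apply MeasureTheory.ProbabilityMeasure.toMeasure_injective
  rw [smulPM_toMeasure]
  simp [one_smul, Measure.map_id']

lemma smulPM_mul (g g' : G) (μ : ProbabilityMeasure X) :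
    smulPM g (smulPM g' μ) = smulPM (g * g') μ := by
  apply MeasureTheory.ProbabilityMeasure.toMeasure_injective
  rw [smulPM_toMeasure, smulPM_toMeasure, smulPM_toMeasure,
    Measure.map_map (continuous_const_smul g : Continuous fun x : X => g • x).measurable (continuous_const_smul g' : Continuous fun x : X => g' • x).measurable]
  congr 1
  funext x
  simp [mul_smul]

lemma smulPM_combPM (g : G) (a : ℝ) (h0 : 0 ≤ a) (h1 : a ≤ 1) (μ ν : ProbabilityMeasure X) :
    smulPM g (combPM a h0 h1 μ ν) = combPM a h0 h1 (smulPM g μ) (smulPM g ν) := by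
  apply MeasureTheory.ProbabilityMeasure.toMeasure_injective
  rw [smulPM_toMeasure, combPM_toMeasure, combPM_toMeasure,
    Measure.map_add _ _ (continuous_const_smul g : Continuous fun x : X => g • x).measurable,
    Measure.map_smul, Measure.map_smul]
  rfl

lemma smulPM_diracPM (g : G) (x : X) : smulPM g (diracPM x) = diracPM (g • x) := by
  apply MeasureTheory.ProbabilityMeasure.toMeasure_injective
  rw [smulPM_toMeasure, diracPM_toMeasure, diracPM_toMeasure,
    Measure.map_dirac' (continuous_const_smul g : Continuous fun x : X => g • x).measurable]

lemma continuous_smulPM (g : G) : Continuous (smulPM (X := X) g) :=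
  MeasureTheory.ProbabilityMeasure.continuous_map (continuous_const_smul g)

lemma continuous_diracPM : Continuous (diracPM (X := X)) :=
  MeasureTheory.continuous_diracProba

end Aux2

section Hull

set_option linter.unusedSectionVars false
variable {X : Type*} [MetricSpace X] [CompactSpace X] [MeasurableSpace X] [BorelSpace X]

/-- Membership in the convex hull (w.r.t. `combPM`) of a set of probability measures. -/
inductive HullMem (S : Set (ProbabilityMeasure X)) : ProbabilityMeasure X → Prop
  | base {μ} : μ ∈ S → HullMem S μ
  | comb (a : ℝ) (h0 : 0 ≤ a) (h1 : a ≤ 1) {μ ν} : HullMem S μ → HullMem S ν →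
      HullMem S (combPM a h0 h1 μ ν)

lemma HullMem.exists_le {S : Set (ProbabilityMeasure X)} {ν : ProbabilityMeasure X}
    (h : HullMem S ν) (f : X →ᵇ ℝ) :
    ∃ σ ∈ S, ∫ x, f x ∂(σ : Measure X) ≤ ∫ x, f x ∂(ν : Measure X) := by
  induction h with
  | base hμ => exact ⟨_, hμ, le_rfl⟩
  | @comb a h0 h1 μ' ν' hμ hν ihμ ihν =>
    obtain ⟨σ₁, hσ₁, h₁⟩ := ihμ
    obtain ⟨σ₂, hσ₂, h₂⟩ := ihν
    rw [integral_combPM]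
    rcases le_total (∫ x, f x ∂(σ₁ : Measure X)) (∫ x, f x ∂(σ₂ : Measure X)) with hle | hle
    · refine ⟨σ₁, hσ₁, ?_⟩
      nlinarith [h₁, le_trans hle h₂]
    · refine ⟨σ₂, hσ₂, ?_⟩
      nlinarith [h₂, le_trans hle h₁]

lemma HullMem.smul {G : Type*} [Group G] [MulAction G X] [ContinuousConstSMul G X]
    {S : Set (ProbabilityMeasure X)} (hS : ∀ g : G, ∀ μ ∈ S, smulPM g μ ∈ S) (g : G)
    {ν : ProbabilityMeasure X} (h : HullMem S ν) : HullMem S (smulPM g ν) := by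
  induction h with
  | base hμ => exact .base (hS g _ hμ)
  | comb a h0 h1 hμ hν ihμ ihν =>
    rw [smulPM_combPM]
    exact .comb a h0 h1 ihμ ihν

lemma closure_hull_combPM {S : Set (ProbabilityMeasure X)} (a : ℝ) (h0 : 0 ≤ a) (h1 : a ≤ 1)
    {μ ν : ProbabilityMeasure X} (hμ : μ ∈ closure {ρ | HullMem S ρ})
    (hν : ν ∈ closure {ρ | HullMem S ρ}) :
    combPM a h0 h1 μ ν ∈ closure {ρ | HullMem S ρ} := by
  have h := image_closure_subset_closure_image (s := {ρ | HullMem S ρ} ×ˢ {ρ | HullMem S ρ})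
    (continuous_combPM a h0 h1)
  have hmem : (μ, ν) ∈ closure ({ρ | HullMem S ρ} ×ˢ {ρ | HullMem S ρ}) := by
    rw [closure_prod_eq]; exact ⟨hμ, hν⟩
  have := h (mem_image_of_mem _ hmem)
  refine closure_mono ?_ this
  rintro _ ⟨⟨p, q⟩, ⟨hp, hq⟩, rfl⟩
  exact HullMem.comb a h0 h1 hp hq

lemma closure_hull_smul {G : Type*} [Group G] [MulAction G X] [ContinuousConstSMul G X]
    {S : Set (ProbabilityMeasure X)} (hS : ∀ g : G, ∀ μ ∈ S, smulPM g μ ∈ S) (g : G)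
    {ν : ProbabilityMeasure X} (hν : ν ∈ closure {ρ | HullMem S ρ}) :
    smulPM g ν ∈ closure {ρ | HullMem S ρ} := by
  have h := image_closure_subset_closure_image (s := {ρ | HullMem S ρ}) (continuous_smulPM g)
  have := h (mem_image_of_mem _ hν)
  refine closure_mono ?_ this
  rintro _ ⟨p, hp, rfl⟩
  exact hp.smul hS g

/-- The distance-to-`y` function as a bounded continuous function. -/
noncomputable def distBCF (y : X) : X →ᵇ ℝ :=
  BoundedContinuousFunction.mkOfCompact ⟨fun z => dist z y, by continuity⟩

@[simp] lemma distBCF_apply (y z : X) : distBCF y z = dist z y := rfl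

lemma exists_mem_integral_dist_lt {S : Set (ProbabilityMeasure X)} {y : X}
    (h : diracPM y ∈ closure {ρ | HullMem S ρ}) {ε : ℝ} (hε : 0 < ε) :
    ∃ ν ∈ S, ∫ z, dist z y ∂(ν : Measure X) < ε := by
  have hopen : IsOpen {ν : ProbabilityMeasure X | ∫ z, distBCF y z ∂(ν : Measure X) < ε} :=
    isOpen_lt (MeasureTheory.ProbabilityMeasure.continuous_integral_boundedContinuousFunction
      (distBCF y)) continuous_const
  have hy : diracPM y ∈ {ν : ProbabilityMeasure X | ∫ z, distBCF y z ∂(ν : Measure X) < ε} := by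
    simp only [mem_setOf_eq, diracPM_toMeasure]
    rw [integral_dirac]
    simpa using hε
  obtain ⟨ν, hν1, hν2⟩ := _root_.mem_closure_iff.mp h _ hopen hy
  obtain ⟨σ, hσS, hle⟩ := HullMem.exists_le hν2 (distBCF y)
  refine ⟨σ, hσS, lt_of_le_of_lt ?_ hν1⟩
  simpa using hle

end Hull

section Estimate

set_option linter.unusedSectionVars false
variable {X : Type*} [MetricSpace X] [CompactSpace X] [MeasurableSpace X] [BorelSpace X]

lemma integral_dist_nonneg (y : X) (ν : ProbabilityMeasure X) :
    0 ≤ ∫ z, dist z y ∂(ν : Measure X) :=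
  integral_nonneg fun _ => dist_nonneg

lemma tendsto_dirac_of_integral_dist {y : X} {νs : ℕ → ProbabilityMeasure X}
    (h : Tendsto (fun n => ∫ z, dist z y ∂(νs n : Measure X)) atTop (𝓝 0)) :
    Tendsto νs atTop (𝓝 (diracPM y)) := by
  rw [MeasureTheory.ProbabilityMeasure.tendsto_iff_forall_integral_tendsto]
  intro f
  have hlim : ∫ z, f z ∂(diracPM y : Measure X) = f y := by
    rw [diracPM_toMeasure, integral_dirac]
  rw [hlim, Metric.tendsto_atTop]
  intro ε hε
  -- uniform continuity of f
  obtain ⟨δ, hδ, hf⟩ := Metric.uniformContinuous_iff.mp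
    (CompactSpace.uniformContinuous_of_continuous f.continuous) (ε / 2) (by linarith)
  set K : ℝ := (2 * ‖f‖ + 1) / δ with hK
  have hKpos : 0 < K := by positivity
  -- pointwise bound
  have hpt : ∀ z : X, |f z - f y| ≤ ε / 2 + K * dist z y := by
    intro z
    rcases lt_or_ge (dist z y) δ with hz | hz
    · have := hf hz
      rw [Real.dist_eq] at this
      have : |f z - f y| ≤ ε / 2 := le_of_lt this
      nlinarith [mul_nonneg hKpos.le (dist_nonneg (x := z) (y := y))]
    · have h1 : |f z - f y| ≤ 2 * ‖f‖ := by
        calc |f z - f y| ≤ |f z| + |f y| := abs_sub _ _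
        _ ≤ ‖f‖ + ‖f‖ := by
            have := f.norm_coe_le_norm z
            have := f.norm_coe_le_norm y
            simp only [Real.norm_eq_abs] at *
            linarith
        _ = 2 * ‖f‖ := by ring
      have h2 : 2 * ‖f‖ ≤ K * dist z y := by
        rw [hK]
        rw [div_mul_eq_mul_div, le_div_iff₀ hδ]
        nlinarith [dist_nonneg (x := z) (y := y), norm_nonneg f]
      linarith [hε]
  -- eventually the dist-integral is small
  have hsmall : ∀ᶠ n in atTop, ∫ z, dist z y ∂(νs n : Measure X) < ε / (4 * K) := by
    have := Metric.tendsto_atTop.mp h (ε / (4 * K)) (by positivity)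
    obtain ⟨N, hN⟩ := this
    refine eventually_atTop.mpr ⟨N, fun n hn => ?_⟩
    have := hN n hn
    rw [Real.dist_eq, sub_zero, abs_of_nonneg (integral_dist_nonneg y (νs n))] at this
    exact this
  have : ∀ᶠ n in atTop, dist (∫ z, f z ∂(νs n : Measure X)) (f y) < ε := by
    filter_upwards [hsmall] with n hn
    have hint_f : Integrable f (νs n : Measure X) := f.integrable _
    have hint_d : Integrable (fun z => dist z y) (νs n : Measure X) := by
      have := (distBCF y).integrable (νs n : Measure X)
      exact this
    rw [Real.dist_eq]
    have step1 : ∫ z, f z ∂(νs n : Measure X) - f y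
        = ∫ z, (f z - f y) ∂(νs n : Measure X) := by
      rw [integral_sub hint_f (integrable_const _)]
      simp [measure_univ]
    rw [step1]
    have step2 : |∫ z, (f z - f y) ∂(νs n : Measure X)|
        ≤ ∫ z, |f z - f y| ∂(νs n : Measure X) := by
      have := norm_integral_le_integral_norm (μ := (νs n : Measure X)) (f := fun z => f z - f y)
      simpa [Real.norm_eq_abs] using this
    have step3 : ∫ z, |f z - f y| ∂(νs n : Measure X)
        ≤ ∫ z, (ε / 2 + K * dist z y) ∂(νs n : Measure X) := by
      apply integral_mono (hint_f.sub (integrable_const _)).abs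
        ((integrable_const _).add (hint_d.const_mul K))
      intro z
      exact hpt z
    have step4 : ∫ z, (ε / 2 + K * dist z y) ∂(νs n : Measure X)
        = ε / 2 + K * ∫ z, dist z y ∂(νs n : Measure X) := by
      rw [integral_add (integrable_const _) (hint_d.const_mul K), integral_const,
        integral_const_mul]
      simp [measure_univ]
    have step5 : K * ∫ z, dist z y ∂(νs n : Measure X) < K * (ε / (4 * K)) :=
      (mul_lt_mul_iff_right₀ hKpos).mpr hn
    have step6 : K * (ε / (4 * K)) = ε / 4 := by
      field_simp
    calc |∫ z, (f z - f y) ∂(νs n : Measure X)| ≤ _ := step2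
      _ ≤ _ := step3
      _ = _ := step4
      _ < ε / 2 + ε / 4 := by linarith
      _ < ε := by linarith
  exact eventually_atTop.mp this

end Estimate

section Forward

set_option linter.unusedSectionVars false
variable {G X : Type*} [Group G] [MetricSpace X] [CompactSpace X] [Nonempty X]
  [MeasurableSpace X] [BorelSpace X] [MulAction G X] [ContinuousConstSMul G X]

lemma forward_key
    (H : ∀ Q : Set (ProbabilityMeasure X), Q.Nonempty → IsClosed Q →
      (∀ (a : ℝ) (ha0 : 0 ≤ a) (ha1 : a ≤ 1), ∀ μ ∈ Q, ∀ ν ∈ Q, combPM a ha0 ha1 μ ν ∈ Q) →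
      (∀ (g : G), ∀ μ ∈ Q, smulPM g μ ∈ Q) → Q = Set.univ)
    (μ : ProbabilityMeasure X) (y : X) {ε : ℝ} (hε : 0 < ε) :
    ∃ g : G, ∫ z, dist z y ∂(smulPM g μ : Measure X) < ε := by
  set S : Set (ProbabilityMeasure X) := Set.range (fun g : G => smulPM g μ) with hS
  have hSinv : ∀ g : G, ∀ ν ∈ S, smulPM g ν ∈ S := by
    rintro g _ ⟨g', rfl⟩
    exact ⟨g * g', (smulPM_mul g g' μ).symm⟩
  set Q : Set (ProbabilityMeasure X) := closure {ρ | HullMem S ρ} with hQdef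
  have hQ : Q = Set.univ := by
    apply H Q
    · exact ⟨μ, subset_closure (HullMem.base ⟨1, smulPM_one μ⟩)⟩
    · exact isClosed_closure
    · intro a h0 h1 μ' hμ' ν' hν'
      exact closure_hull_combPM a h0 h1 hμ' hν'
    · intro g ν hν
      exact closure_hull_smul hSinv g hν
  have hy : diracPM y ∈ Q := by rw [hQ]; trivial
  obtain ⟨ν, hνS, hint⟩ := exists_mem_integral_dist_lt hy hε
  obtain ⟨g, rfl⟩ := hνS
  exact ⟨g, hint⟩

end Forward

section Backward

set_option linter.unusedSectionVars false
variable {X : Type*} [MetricSpace X] [CompactSpace X] [Nonempty X] [MeasurableSpace X]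
  [BorelSpace X]

lemma mem_of_finComb (Q : Set (ProbabilityMeasure X))
    (hQcomb : ∀ (a : ℝ) (ha0 : 0 ≤ a) (ha1 : a ≤ 1),
      ∀ μ ∈ Q, ∀ ν ∈ Q, combPM a ha0 ha1 μ ν ∈ Q) :
    ∀ (k : ℕ) (w : ℕ → ℝ), (∀ i, 0 ≤ w i) → (∑ i ∈ Finset.range k, w i = 1) →
    ∀ (μs : ℕ → ProbabilityMeasure X), (∀ i, μs i ∈ Q) →
    ∀ π : ProbabilityMeasure X,
      (π : Measure X) = ∑ i ∈ Finset.range k, ENNReal.ofReal (w i) • (μs i : Measure X) →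
      π ∈ Q := by
  intro k
  induction k with
  | zero => intro w _ hsum; simp at hsum
  | succ k ih =>
    intro w hw hsum μs hμs π hπ
    rw [Finset.sum_range_succ] at hsum hπ
    set r : ℝ := ∑ i ∈ Finset.range k, w i with hr
    have hr0 : 0 ≤ r := Finset.sum_nonneg fun i _ => hw i
    rcases eq_or_lt_of_le hr0 with hrz | hrpos
    · have hall : ∀ i ∈ Finset.range k, w i = 0 :=
        (Finset.sum_eq_zero_iff_of_nonneg (fun j _ => hw j)).mp hrz.symm
      have hwk : w k = 1 := by rw [← hrz] at hsum; linarith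
      have hz : ∑ i ∈ Finset.range k, ENNReal.ofReal (w i) • (μs i : Measure X) = 0 :=
        Finset.sum_eq_zero (fun i hi => by rw [hall i hi]; simp)
      have hmeq : (π : Measure X) = (μs k : Measure X) := by
        rw [hπ, hz, hwk]
        simp
      have : π = μs k := MeasureTheory.ProbabilityMeasure.toMeasure_injective hmeq
      rw [this]; exact hμs k
    · have hwk0 : 0 ≤ w k := hw k
      have hwk1 : w k ≤ 1 := by linarith
      have hsum' : ∑ i ∈ Finset.range k, w i / r = 1 := by
        rw [← Finset.sum_div, ← hr, div_self (ne_of_gt hrpos)]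
      have hρmass : IsProbabilityMeasure
          (∑ i ∈ Finset.range k, ENNReal.ofReal (w i / r) • (μs i : Measure X)) := by
        constructor
        rw [Measure.finset_sum_apply]
        simp only [Measure.smul_apply, measure_univ, smul_eq_mul, mul_one]
        rw [← ENNReal.ofReal_sum_of_nonneg (fun i _ => div_nonneg (hw i) hr0), hsum']
        simp
      set ρ : ProbabilityMeasure X := ⟨_, hρmass⟩ with hρ
      have hρQ : ρ ∈ Q :=
        ih (fun i => w i / r) (fun i => div_nonneg (hw i) hr0) hsum' μs hμs ρ rfl
      have hπ2 : π = combPM (w k) hwk0 hwk1 (μs k) ρ := by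
        apply MeasureTheory.ProbabilityMeasure.toMeasure_injective
        rw [combPM_toMeasure, hπ]
        have h1k : (1 : ℝ) - w k = r := by linarith
        have hrfl : (ρ : Measure X)
            = ∑ i ∈ Finset.range k, ENNReal.ofReal (w i / r) • (μs i : Measure X) := rfl
        rw [h1k, hrfl, Finset.smul_sum]
        rw [add_comm]
        congr 1
        refine Finset.sum_congr rfl (fun i _ => ?_)
        rw [smul_smul, ← ENNReal.ofReal_mul hr0, mul_comm r, div_mul_cancel₀ _ (ne_of_gt hrpos)]
      rw [hπ2]
      exact hQcomb _ _ _ _ (hμs k) _ hρQ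

end Backward

section Partition

set_option linter.unusedSectionVars false
variable {X : Type*} [MetricSpace X] [CompactSpace X] [Nonempty X] [MeasurableSpace X]
  [BorelSpace X]

lemma exists_partition {ε : ℝ} (hε : 0 < ε) :
    ∃ (k : ℕ) (c : ℕ → X) (B : ℕ → Set X),
      (∀ i, MeasurableSet (B i)) ∧ (∀ i, ∀ z ∈ B i, dist z (c i) < ε) ∧
      Pairwise (Function.onFun Disjoint B) ∧ (⋃ i, B i) = univ ∧ (∀ i, k ≤ i → B i = ∅) := by
  obtain ⟨t, ht⟩ := isCompact_univ.elim_finite_subcover (fun x : X => Metric.ball x ε)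
    (fun _ => Metric.isOpen_ball) (fun z _ => mem_iUnion.mpr ⟨z, Metric.mem_ball_self hε⟩)
  set l := t.toList with hl
  set x₀ : X := Classical.arbitrary X
  set k := l.length with hk
  set c : ℕ → X := fun i => l.getD i x₀ with hc
  set Bs : ℕ → Set X := fun i => if i < k then Metric.ball (c i) ε else ∅ with hBs
  set B : ℕ → Set X := disjointed Bs with hB
  have hBsub : ∀ i, B i ⊆ Bs i := disjointed_subset Bs
  refine ⟨k, c, B, ?_, ?_, disjoint_disjointed Bs, ?_, ?_⟩
  · refine MeasurableSet.disjointed (fun i => ?_)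
    by_cases h : i < k <;> simp [hBs, h, Metric.isOpen_ball.measurableSet]
  · intro i z hz
    have := hBsub i hz
    by_cases h : i < k
    · rw [hBs] at this; simp only [h, if_true] at this
      exact Metric.mem_ball.mp this
    · rw [hBs] at this; simp only [h, if_false] at this
      exact absurd this (notMem_empty z)
  · rw [hB, iUnion_disjointed]
    apply eq_univ_of_univ_subset
    intro z _
    obtain ⟨x, hxt, hzx⟩ := by
      have := ht (mem_univ z)
      simpa only [mem_iUnion, exists_prop] using this
    have hxl : x ∈ l := by rw [hl]; exact Finset.mem_toList.mpr hxt
    obtain ⟨j, hj, hjx⟩ := List.mem_iff_getElem.mp hxl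
    refine mem_iUnion.mpr ⟨j, ?_⟩
    have hcj : c j = x := by show l.getD j x₀ = x; rw [List.getD_eq_getElem l x₀ hj]; exact hjx
    rw [hBs]
    simp only [hj, if_pos]
    rw [hcj]
    split_ifs with hjk
    · exact hzx
    · exact absurd hj hjk
  · intro i hi
    refine eq_empty_of_subset_empty ?_
    refine (hBsub i).trans ?_
    rw [hBs]
    simp [Nat.not_lt.mpr hi]

end Partition

section Density

set_option linter.unusedSectionVars false
variable {X : Type*} [MetricSpace X] [CompactSpace X] [Nonempty X] [MeasurableSpace X]
  [BorelSpace X]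

lemma exists_approx (ν : ProbabilityMeasure X) {η : ℝ} (hη : 0 < η) :
    ∃ (k : ℕ) (w : ℕ → ℝ) (c : ℕ → X) (σ : ProbabilityMeasure X),
      (∀ i, 0 ≤ w i) ∧ (∑ i ∈ Finset.range k, w i = 1) ∧
      ((σ : Measure X) = ∑ i ∈ Finset.range k, ENNReal.ofReal (w i) • (diracPM (c i) : Measure X)) ∧
      (∀ f : X →ᵇ ℝ, ∀ ε' : ℝ, 0 < ε' → (∀ z w : X, dist z w < η → |f z - f w| ≤ ε') →
        |∫ z, f z ∂(σ : Measure X) - ∫ z, f z ∂(ν : Measure X)| ≤ ε') := by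
  obtain ⟨k, c, B, hmeas, hdist, hdisj, hcoverAll, htail⟩ := exists_partition (X := X) hη
  have hcover : ⋃ i ∈ Finset.range k, B i = univ := by
    apply eq_univ_of_univ_subset
    intro z _
    have hz : z ∈ ⋃ i, B i := hcoverAll ▸ mem_univ z
    obtain ⟨i, hi⟩ := mem_iUnion.mp hz
    rcases lt_or_ge i k with h | h
    · exact mem_biUnion (Finset.mem_range.mpr h) hi
    · rw [htail i h] at hi; exact absurd hi (notMem_empty z)
  set w : ℕ → ℝ := fun i => ((ν : Measure X) (B i)).toReal with hw
  have hw0 : ∀ i, 0 ≤ w i := fun i => ENNReal.toReal_nonneg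
  have hsum_meas : ∑ i ∈ Finset.range k, (ν : Measure X) (B i) = 1 := by
    rw [← measure_biUnion_finset ?_ (fun i _ => hmeas i)]
    · rw [hcover, measure_univ]
    · intro i _ j _ hij
      exact hdisj hij
  have hsumw : ∑ i ∈ Finset.range k, w i = 1 := by
    rw [hw, ← ENNReal.toReal_sum (fun i _ => measure_ne_top _ _), hsum_meas, ENNReal.toReal_one]
  set m : Measure X := ∑ i ∈ Finset.range k, ((ν : Measure X) (B i)) • Measure.dirac (c i)
    with hm
  have hmass : IsProbabilityMeasure m := by
    constructor
    rw [hm, Measure.finset_sum_apply]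
    simp only [Measure.smul_apply, measure_univ, smul_eq_mul, mul_one]
    exact hsum_meas
  set σ : ProbabilityMeasure X := ⟨m, hmass⟩ with hσ
  have hσm : (σ : Measure X) = m := rfl
  refine ⟨k, w, c, σ, hw0, hsumw, ?_, ?_⟩
  · rw [hσm, hm]
    refine Finset.sum_congr rfl (fun i _ => ?_)
    rw [hw, ENNReal.ofReal_toReal (measure_ne_top _ _)]
    rfl
  · intro f ε' hε' hmod
    have hint : Integrable f (ν : Measure X) := f.integrable _
    -- integral against σ
    have hIσ : ∫ z, f z ∂(σ : Measure X) = ∑ i ∈ Finset.range k, w i * f (c i) := by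
      rw [hσm, hm, integral_finset_sum_measure (fun i _ =>
        (f.integrable _).smul_measure (measure_ne_top _ _))]
      refine Finset.sum_congr rfl (fun i _ => ?_)
      rw [integral_smul_measure, integral_dirac]
      rfl
    -- integral against ν
    have hIν : ∫ z, f z ∂(ν : Measure X)
        = ∑ i ∈ Finset.range k, ∫ z in B i, f z ∂(ν : Measure X) := by
      rw [← setIntegral_univ (μ := (ν : Measure X)) (f := fun z => f z), ← hcover,
        integral_biUnion_finset _ (fun i _ => hmeas i) ?_ (fun i _ => hint.integrableOn)]
      intro i _ j _ hij
      exact hdisj hij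
    rw [hIσ, hIν, ← Finset.sum_sub_distrib]
    refine le_trans (Finset.abs_sum_le_sum_abs _ _) ?_
    have hterm : ∀ i ∈ Finset.range k,
        |w i * f (c i) - ∫ z in B i, f z ∂(ν : Measure X)| ≤ ε' * w i := by
      intro i _
      have hconst : ∫ z in B i, f (c i) ∂(ν : Measure X) = w i * f (c i) := by
        rw [setIntegral_const]
        rw [hw]
        rfl
      have hsub : w i * f (c i) - ∫ z in B i, f z ∂(ν : Measure X)
          = ∫ z in B i, (f (c i) - f z) ∂(ν : Measure X) := by
        rw [integral_sub (integrableOn_const (C := f (c i)) (measure_ne_top _ _))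
          hint.integrableOn, hconst]
      rw [hsub]
      have := norm_setIntegral_le_of_norm_le_const (μ := (ν : Measure X)) (s := B i)
        (measure_lt_top _ _) (C := ε') (f := fun z => f (c i) - f z) ?_
      · rw [Real.norm_eq_abs] at this
        calc |∫ z in B i, (f (c i) - f z) ∂(ν : Measure X)| ≤ ε' * ((ν : Measure X) (B i)).toReal := this
          _ = ε' * w i := by rw [hw]
      · intro z hz
        rw [Real.norm_eq_abs, abs_sub_comm]
        exact hmod z (c i) (hdist i z hz)
    refine le_trans (Finset.sum_le_sum hterm) ?_
    rw [← Finset.mul_sum, hsumw, mul_one]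

end Density

section Density2

set_option linter.unusedSectionVars false
variable {X : Type*} [MetricSpace X] [CompactSpace X] [Nonempty X] [MeasurableSpace X]
  [BorelSpace X]

lemma mem_of_closed_comb_diracs (Q : Set (ProbabilityMeasure X)) (hQclosed : IsClosed Q)
    (hQcomb : ∀ (a : ℝ) (ha0 : 0 ≤ a) (ha1 : a ≤ 1),
      ∀ μ ∈ Q, ∀ ν ∈ Q, combPM a ha0 ha1 μ ν ∈ Q)
    (hdirac : ∀ x : X, diracPM x ∈ Q) (ν : ProbabilityMeasure X) : ν ∈ Q := by
  have key : ∀ n : ℕ, ∃ σ : ProbabilityMeasure X, σ ∈ Q ∧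
      (∀ f : X →ᵇ ℝ, ∀ ε' : ℝ, 0 < ε' →
        (∀ z w : X, dist z w < 1 / ((n : ℝ) + 1) → |f z - f w| ≤ ε') →
        |∫ z, f z ∂(σ : Measure X) - ∫ z, f z ∂(ν : Measure X)| ≤ ε') := by
    intro n
    obtain ⟨k, w, c, σ, hw0, hsumw, hσeq, happrox⟩ := exists_approx ν
      (show (0:ℝ) < 1 / ((n : ℝ) + 1) by positivity)
    refine ⟨σ, ?_, happrox⟩
    exact mem_of_finComb Q hQcomb k w hw0 hsumw (fun i => diracPM (c i))
      (fun i => hdirac _) σ hσeq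
  choose σ hσQ happ using key
  have htends : Tendsto σ atTop (𝓝 ν) := by
    rw [MeasureTheory.ProbabilityMeasure.tendsto_iff_forall_integral_tendsto]
    intro f
    rw [Metric.tendsto_atTop]
    intro ε hε
    obtain ⟨δ, hδ, hf⟩ := Metric.uniformContinuous_iff.mp
      (CompactSpace.uniformContinuous_of_continuous f.continuous) (ε / 2) (by linarith)
    obtain ⟨N, hN⟩ := exists_nat_gt (1 / δ)
    refine ⟨N, fun n hn => ?_⟩
    have hNn : (1 : ℝ) / δ < (n : ℝ) + 1 := by
      have : (N : ℝ) ≤ n := Nat.cast_le.mpr hn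
      linarith
    have h1 : 1 / ((n : ℝ) + 1) < δ := by
      rw [div_lt_iff₀ (by positivity)]
      rw [div_lt_iff₀ hδ] at hNn
      nlinarith
    have := happ n f (ε / 2) (by linarith) (fun z w hzw => by
      have := hf (lt_trans hzw h1)
      rw [Real.dist_eq] at this
      exact this.le)
    rw [Real.dist_eq]
    linarith
  exact hQclosed.mem_of_tendsto htends (Eventually.of_forall hσQ)

end Density2

/-- `(M(X),G)` is an irreducible affine system iff `(X,G)` is minimal and strongly
proximal. -/
theorem measures_irreducible_iff_minimal_stronglyProximal
    {G X : Type*} [Group G] [TopologicalSpace G] [IsTopologicalGroup G]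
    [MetricSpace X] [CompactSpace X] [Nonempty X] [MeasurableSpace X] [BorelSpace X]
    [MulAction G X] [ContinuousSMul G X] :
    (∀ Q : Set (ProbabilityMeasure X), Q.Nonempty → IsClosed Q →
      (∀ (a : ℝ) (ha0 : 0 ≤ a) (ha1 : a ≤ 1), ∀ μ ∈ Q, ∀ ν ∈ Q, combPM a ha0 ha1 μ ν ∈ Q) →
      (∀ (g : G), ∀ μ ∈ Q, smulPM g μ ∈ Q) → Q = Set.univ) ↔
    ((∀ x : X, Dense (Set.range fun g : G => g • x)) ∧
      (∀ μ : ProbabilityMeasure X, ∃ gs : ℕ → G, ∃ x : X,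
        Tendsto (fun n => smulPM (gs n) μ) atTop (𝓝 (diracPM x)))) := by
  constructor
  · intro H
    constructor
    · intro x
      rw [Metric.dense_iff]
      intro y r hr
      obtain ⟨g, hg⟩ := forward_key H (diracPM x) y hr
      rw [smulPM_diracPM, diracPM_toMeasure, integral_dirac] at hg
      exact ⟨g • x, Metric.mem_ball.mpr hg, ⟨g, rfl⟩⟩
    · intro μ
      set x : X := Classical.arbitrary X
      have key : ∀ n : ℕ, ∃ g : G,
          ∫ z, dist z x ∂(smulPM g μ : Measure X) < 1 / ((n : ℝ) + 1) :=
        fun n => forward_key H μ x (by positivity)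
      choose gs hgs using key
      refine ⟨gs, x, tendsto_dirac_of_integral_dist ?_⟩
      apply tendsto_of_tendsto_of_tendsto_of_le_of_le tendsto_const_nhds
        tendsto_one_div_add_atTop_nhds_zero_nat
      · exact fun n => integral_dist_nonneg x _
      · exact fun n => (hgs n).le
  · rintro ⟨hmin, hprox⟩ Q hQne hQclosed hQcomb hQinv
    obtain ⟨μ₀, hμ₀⟩ := hQne
    obtain ⟨gs, x, htend⟩ := hprox μ₀
    have hδx : diracPM x ∈ Q :=
      hQclosed.mem_of_tendsto htend (Eventually.of_forall fun n => hQinv _ _ hμ₀)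
    have hdiracs : ∀ y : X, diracPM y ∈ Q := by
      intro y
      have hyc : y ∈ closure (range fun g : G => g • x) := (hmin x) y
      have h2 : diracPM y ∈ closure (diracPM '' (range fun g : G => g • x)) :=
        image_closure_subset_closure_image continuous_diracPM (mem_image_of_mem _ hyc)
      have himg : diracPM '' (range fun g : G => g • x) ⊆ Q := by
        rintro _ ⟨_, ⟨g, rfl⟩, rfl⟩
        rw [← smulPM_diracPM]
        exact hQinv g _ hδx
      exact hQclosed.closure_subset_iff.mpr himg h2
    exact eq_univ_of_forall fun ν => mem_of_closed_comb_diracs Q hQclosed hQcomb hdiracs ν
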